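/- Progress: in the credit protocol, if a node has pending input (a queued data item or a queued signal), then at least one receiver transition is enabled: it can consume a data item, transfer credit from the head signal, or consume the head signal (assuming its downstream output queue has space). -/
import Mathlib

/-- progress: consider a credit-protocol channel state with
`Q` queued data items, signal-credit queue `S`, and credit counter `c`
satisfying the reachable-state invariant `0 < c → 0 < Q`.  If the node has
pending input (a queued data item or a queued signal), then at least one
receiver transition is enabled: consume-data (`0 < Q` and `S = [] ∨ 0 < c`),
transfer-credit (`c = 0`, `S` nonempty with positive head credit), or
consume-signal (`c = 0`, `S` nonempty with zero head credit). -/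
theorem receiver_progress (Q : ℕ) (S : List ℕ) (c : ℕ)
    (hinv : 0 < c → 0 < Q) (hpending : 0 < Q ∨ S ≠ []) :
    (0 < Q ∧ (S = [] ∨ 0 < c)) ∨
    (c = 0 ∧ ∃ h S', S = h :: S' ∧ 0 < h) ∨
    (c = 0 ∧ ∃ S', S = 0 :: S') := by
  rcases Nat.eq_zero_or_pos c with hc | hc
  · cases S with
    | nil =>
      rcases hpending with hQ | hS
      · exact Or.inl ⟨hQ, Or.inl rfl⟩
      · exact absurd rfl hS
    | cons h t =>
      rcases Nat.eq_zero_or_pos h with hh | hh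
      · exact Or.inr (Or.inr ⟨hc, t, by rw [hh]⟩)
      · exact Or.inr (Or.inl ⟨hc, h, t, rfl, hh⟩)
  · exact Or.inl ⟨hinv hc, Or.inr hc⟩
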